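/- The Cercignani–Lampis kernel satisfies the reciprocity property: for every unit vector n in R^3, every T_w > 0, every r_perp in (0,1], every r_parallel in (0,2), and all u, v in R^3 with n·u > 0 and n·v < 0, one has R(u→v) = R(-v→-u) · ( e^{-|v|^2/(2T_w)} / e^{-|u|^2/(2T_w)} ) · ( |n·v| / |n·u| ). -/

import Mathlib

open MeasureTheory Real

/-- Modified Bessel function of the first kind of order zero,
`I₀(y) = (1/π) ∫_0^π e^{y cos φ} dφ`. -/
noncomputable def besselI0 (y : ℝ) : ℝ :=
  (1 / Real.pi) * ∫ φ in (0:ℝ)..Real.pi, Real.exp (y * Real.cos φ)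

/-- The Cercignani–Lampis scattering kernel `R(u → v)` with unit normal `n`,
wall temperature `Tw` and accommodation coefficients `rPerp`, `rPar`. -/
noncomputable def CLkernel (n : EuclideanSpace ℝ (Fin 3)) (Tw rPerp rPar : ℝ)
    (u v : EuclideanSpace ℝ (Fin 3)) : ℝ :=
  (2 / (Real.pi * rPerp * rPar * (2 - rPar))) * (|(inner ℝ n v : ℝ)| / (2 * Tw) ^ 2) *
    Real.exp (-(1 / (2 * Tw)) *
      (((inner ℝ n v : ℝ) ^ 2 + (1 - rPerp) * (inner ℝ n u : ℝ) ^ 2) / rPerp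
        + ‖(v - (inner ℝ n v : ℝ) • n) - (1 - rPar) • (u - (inner ℝ n u : ℝ) • n)‖ ^ 2
            / (rPar * (2 - rPar)))) *
    besselI0 (Real.sqrt (1 - rPerp) * (inner ℝ n v : ℝ) * (inner ℝ n u : ℝ) / (Tw * rPerp))

/-- Reciprocity of the Cercignani–Lampis kernel:
`R(u→v) = R(-v→-u) · (e^{-|v|²/(2T_w)}/e^{-|u|²/(2T_w)}) · (|n·v|/|n·u|)`. -/
theorem CL_reciprocity (n : EuclideanSpace ℝ (Fin 3)) (hn : ‖n‖ = 1)
    (Tw : ℝ) (hTw : 0 < Tw) (rPerp rPar : ℝ)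
    (hrPerp : 0 < rPerp) (hrPerp' : rPerp ≤ 1)
    (hrPar : 0 < rPar) (hrPar' : rPar < 2)
    (u v : EuclideanSpace ℝ (Fin 3))
    (hu : 0 < (inner ℝ n u : ℝ)) (hv : (inner ℝ n v : ℝ) < 0) :
    CLkernel n Tw rPerp rPar u v
      = CLkernel n Tw rPerp rPar (-v) (-u)
          * (Real.exp (-‖v‖ ^ 2 / (2 * Tw)) / Real.exp (-‖u‖ ^ 2 / (2 * Tw)))
          * (|(inner ℝ n v : ℝ)| / |(inner ℝ n u : ℝ)|) := by
  have ha : (inner ℝ n u : ℝ) ≠ 0 := ne_of_gt hu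
  have hTw' : (2 * Tw) ≠ 0 := by positivity
  have hrPerp0 : rPerp ≠ 0 := ne_of_gt hrPerp
  have hrPar0 : rPar ≠ 0 := ne_of_gt hrPar
  have hrPar2 : (2 - rPar) ≠ 0 := by linarith
  unfold CLkernel
  simp only [inner_neg_right]
  set a : ℝ := (inner ℝ n u : ℝ) with hA
  set b : ℝ := (inner ℝ n v : ℝ) with hB
  set P : EuclideanSpace ℝ (Fin 3) := v - b • n with hP
  set Q : EuclideanSpace ℝ (Fin 3) := u - a • n with hQ
  set s : ℝ := (inner ℝ P Q : ℝ) with hS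
  have hPn : ‖P‖ ^ 2 = ‖v‖ ^ 2 - b ^ 2 := by
    rw [hP, norm_sub_sq_real, real_inner_smul_right, real_inner_comm, ← hB, norm_smul,
      Real.norm_eq_abs, hn, mul_one, sq_abs]
    ring
  have hQn : ‖Q‖ ^ 2 = ‖u‖ ^ 2 - a ^ 2 := by
    rw [hQ, norm_sub_sq_real, real_inner_smul_right, real_inner_comm, ← hA, norm_smul,
      Real.norm_eq_abs, hn, mul_one, sq_abs]
    ring
  have hvec : (-u - (-a) • n) - (1 - rPar) • (-v - (-b) • n) = -(Q - (1 - rPar) • P) := by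
    rw [hP, hQ]
    module
  rw [hvec, norm_neg]
  have hL : ‖P - (1 - rPar) • Q‖ ^ 2
      = ‖v‖ ^ 2 - b ^ 2 - 2 * (1 - rPar) * s + (1 - rPar) ^ 2 * (‖u‖ ^ 2 - a ^ 2) := by
    rw [norm_sub_sq_real, real_inner_smul_right, ← hS, norm_smul, Real.norm_eq_abs, mul_pow,
      sq_abs, hPn, hQn]
    ring
  have hR : ‖Q - (1 - rPar) • P‖ ^ 2
      = ‖u‖ ^ 2 - a ^ 2 - 2 * (1 - rPar) * s + (1 - rPar) ^ 2 * (‖v‖ ^ 2 - b ^ 2) := by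
    rw [norm_sub_sq_real, real_inner_smul_right, real_inner_comm, ← hS, norm_smul,
      Real.norm_eq_abs, mul_pow, sq_abs, hPn, hQn]
    ring
  rw [hL, hR]
  rw [show Real.sqrt (1 - rPerp) * -a * -b / (Tw * rPerp)
      = Real.sqrt (1 - rPerp) * b * a / (Tw * rPerp) by ring]
  have hE : Real.exp (-(1 / (2 * Tw)) *
        ((b ^ 2 + (1 - rPerp) * a ^ 2) / rPerp
          + (‖v‖ ^ 2 - b ^ 2 - 2 * (1 - rPar) * s + (1 - rPar) ^ 2 * (‖u‖ ^ 2 - a ^ 2))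
              / (rPar * (2 - rPar))))
      = Real.exp (-(1 / (2 * Tw)) *
        (((-a) ^ 2 + (1 - rPerp) * (-b) ^ 2) / rPerp
          + (‖u‖ ^ 2 - a ^ 2 - 2 * (1 - rPar) * s + (1 - rPar) ^ 2 * (‖v‖ ^ 2 - b ^ 2))
              / (rPar * (2 - rPar))))
        * (Real.exp (-‖v‖ ^ 2 / (2 * Tw)) / Real.exp (-‖u‖ ^ 2 / (2 * Tw))) := by
    rw [← Real.exp_sub, ← Real.exp_add]
    congr 1
    field_simp
    ring
  rw [hE, abs_neg]
  have habs : |a| ≠ 0 := abs_ne_zero.mpr ha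
  field_simp
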